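/- For every real t ≠ 0, ∫_{[0,π]²} e^{2it(cosθ₁ + cosθ₂)} δ₂(θ₁,θ₂) dθ₁ dθ₂ = 4·J₁(2t)²/t² − 6·J₁(2t)·J₂(2t)/t³ + 4·J₂(2t)²/t², where J₁ and J₂ are the Bessel functions of the first kind. -/

import Mathlib

open MeasureTheory

/-- The Bessel function of the first kind of integer order `n`,
`J_n(x) = Σ_{k=0}^∞ (−1)^k/(k!·(k+n)!) · (x/2)^{2k+n}`. -/
noncomputable def besselJ (n : ℕ) (x : ℝ) : ℝ :=
  ∑' k : ℕ, (-1 : ℝ) ^ k / (k.factorial * (k + n).factorial) * (x / 2) ^ (2 * k + n)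

/-- The Weyl density `δ₂` of `USp₄` on `[0,π]²`. -/
noncomputable def weylDensity2 (x y : ℝ) : ℝ :=
  (2 / Real.pi ^ 2) * Real.sin x ^ 2 * Real.sin y ^ 2 *
    (2 * Real.cos y - 2 * Real.cos x) ^ 2

open intervalIntegral Real


/-- auxiliary even-part series -/
noncomputable def gser (m : ℕ) (z : ℝ) (k : ℕ) : ℝ :=
  (-1 : ℝ) ^ k / (k.factorial * (k + m).factorial) * (z / 2) ^ (2 * k)

noncomputable def gs (m : ℕ) (z : ℝ) : ℝ := ∑' k : ℕ, gser m z k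

lemma gs_summable (m : ℕ) (z : ℝ) : Summable (gser m z) := by
  apply Summable.of_norm_bounded (Real.summable_pow_div_factorial ((z/2)^2))
  intro k
  rw [gser, norm_mul, norm_div, norm_pow, norm_neg, norm_one, one_pow, one_div,
    pow_mul, norm_pow]
  rw [Real.norm_eq_abs (((z:ℝ)/2)^2), abs_of_nonneg (by positivity : (0:ℝ) ≤ (z/2)^2)]
  rw [Real.norm_eq_abs ((k.factorial : ℝ) * _), abs_of_nonneg (by positivity)]
  rw [div_eq_inv_mul, mul_comm]
  apply mul_le_mul_of_nonneg_left _ (by positivity)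
  rw [inv_le_inv₀ (by positivity) (by positivity)]
  calc (k.factorial : ℝ) = k.factorial * 1 := by ring
    _ ≤ k.factorial * (k+m).factorial := by
        apply mul_le_mul_of_nonneg_left _ (by positivity)
        exact_mod_cast Nat.one_le_iff_ne_zero.mpr (Nat.factorial_ne_zero _)

lemma besselJ_eq_gs (m : ℕ) (z : ℝ) : besselJ m z = (z/2)^m * gs m z := by
  rw [besselJ, gs, ← tsum_mul_left]
  congr 1; funext k; rw [gser, pow_add]; ring

lemma pow_half_sq (z : ℝ) (j : ℕ) : (z/2)^(2*j) = z^(2*j) / 4^j := by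
  rw [pow_mul, pow_mul, div_pow, div_pow]
  norm_num

lemma Iz_pow_even (z : ℝ) (j : ℕ) : (Complex.I * z)^(2*j) = (((-1:ℝ)^j * z^(2*j) : ℝ) : ℂ) := by
  rw [pow_mul, mul_pow, Complex.I_sq]
  push_cast
  rw [pow_mul]
  ring

lemma cos_pow_even_integral (j : ℕ) :
    ∫ x in (0:ℝ)..π, Real.cos x ^ (2*j) = π * (2*j).factorial / (4^j * (j.factorial)^2) := by
  induction j with
  | zero => simp
  | succ k ih =>
    have h := integral_cos_pow (a := 0) (b := π) (2*k)
    have h2 : 2*(k+1) = 2*k+2 := by ring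
    rw [h2, h, ih]
    simp [Real.sin_pi]
    push_cast [Nat.factorial_succ]
    field_simp
    ring

lemma momentM_odd (j : ℕ) :
    ∫ x in (0:ℝ)..π, Real.cos x ^ (2*j+1) * Real.sin x ^ 2 = 0 := by
  have := integral_sin_pow_mul_cos_pow_odd (a := 0) (b := π) 2 j
  simp [Real.sin_pi, mul_comm] at this ⊢
  simpa [mul_comm] using this

lemma momentM_even' (n : ℕ) :
    ∫ x in (0:ℝ)..π, Real.cos x ^ n * Real.sin x ^ 2
      = (1/(n+2)) * ∫ x in (0:ℝ)..π, Real.cos x ^ n := by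
  have hsub : ∀ x : ℝ, Real.cos x ^ n * Real.sin x ^ 2
      = Real.cos x ^ n - Real.cos x ^ (n+2) := by
    intro x
    have h := Real.sin_sq_add_cos_sq x
    have : Real.sin x ^ 2 = 1 - Real.cos x ^ 2 := by linarith
    rw [this, pow_add]
    ring
  rw [intervalIntegral.integral_congr (fun x _ => hsub x)]
  rw [intervalIntegral.integral_sub (f := fun x => Real.cos x ^ n)
    (g := fun x => Real.cos x ^ (n+2)) ((Real.continuous_cos.pow n).intervalIntegrable 0 π)
    ((Real.continuous_cos.pow (n+2)).intervalIntegrable 0 π)]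
  rw [integral_cos_pow n]
  simp [Real.sin_pi]
  field_simp
  ring

lemma momentM_even (j : ℕ) :
    ∫ x in (0:ℝ)..π, Real.cos x ^ (2*j) * Real.sin x ^ 2
      = π * (2*j).factorial / (2 * 4^j * j.factorial * (j+1).factorial) := by
  rw [momentM_even', cos_pow_even_integral]
  have h : ((j+1).factorial : ℝ) = (j+1) * j.factorial := by
    exact_mod_cast Nat.factorial_succ j
  rw [h]
  push_cast
  have h4 : (4:ℝ)^j ≠ 0 := by positivity
  have hf : (j.factorial : ℝ) ≠ 0 := by positivity
  field_simp

lemma myofReal {μ : Measure ℝ} {f : ℝ → ℝ} :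
    ∫ x, ((f x : ℝ) : ℂ) ∂μ = ((∫ x, f x ∂μ : ℝ) : ℂ) := integral_ofReal

lemma integral_exp_expand (z : ℝ) (m : ℕ) :
    ∫ θ in Set.Icc (0:ℝ) π,
        Complex.exp (Complex.I * z * Real.cos θ) * ((Real.sin θ ^ 2 * Real.cos θ ^ m : ℝ) : ℂ)
      = ∑' k : ℕ, (Complex.I * z) ^ k / (k.factorial : ℂ) *
          ((∫ x in (0:ℝ)..π, Real.cos x ^ (k+m) * Real.sin x ^ 2 : ℝ) : ℂ) := by
  set f : ℕ → ℝ → ℂ := fun k θ =>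
    (Complex.I * z) ^ k / (k.factorial : ℂ) *
      ((Real.cos θ ^ (k+m) * Real.sin θ ^ 2 : ℝ) : ℂ) with hf_def
  have hpt : ∀ θ : ℝ, Complex.exp (Complex.I * z * Real.cos θ) *
      ((Real.sin θ ^ 2 * Real.cos θ ^ m : ℝ) : ℂ) = ∑' k, f k θ := by
    intro θ
    have hexp : Complex.exp (Complex.I * z * Real.cos θ)
        = ∑' k : ℕ, (Complex.I * z * Real.cos θ) ^ k / (k.factorial : ℂ) := by
      rw [Complex.exp_eq_exp_ℂ, NormedSpace.exp_eq_tsum_div]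
    rw [hexp, ← tsum_mul_right]
    congr 1
    funext k
    simp only [hf_def]
    push_cast
    ring
  have hnorm : ∀ k θ, ‖f k θ‖ ≤ |z| ^ k / k.factorial := by
    intro k θ
    have h1 : ‖Complex.I * (z:ℂ)‖ = |z| := by
      rw [norm_mul, Complex.norm_I, one_mul, Complex.norm_real, Real.norm_eq_abs]
    have h2 : ‖((Real.cos θ ^ (k+m) * Real.sin θ ^ 2 : ℝ) : ℂ)‖ ≤ 1 := by
      rw [Complex.norm_real, Real.norm_eq_abs, abs_mul, abs_pow, abs_pow]
      calc |Real.cos θ| ^ (k+m) * |Real.sin θ| ^ 2 ≤ 1 ^ (k+m) * 1 ^ 2 := by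
            apply mul_le_mul
            · exact pow_le_pow_left₀ (abs_nonneg _) (Real.abs_cos_le_one θ) _
            · exact pow_le_pow_left₀ (abs_nonneg _) (Real.abs_sin_le_one θ) _
            · positivity
            · positivity
        _ = 1 := by norm_num
    calc ‖f k θ‖ = ‖(Complex.I * z) ^ k / (k.factorial : ℂ)‖ *
          ‖((Real.cos θ ^ (k+m) * Real.sin θ ^ 2 : ℝ) : ℂ)‖ := norm_mul _ _
      _ ≤ ‖(Complex.I * z) ^ k / (k.factorial : ℂ)‖ * 1 :=
          mul_le_mul_of_nonneg_left h2 (norm_nonneg _)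
      _ = |z| ^ k / k.factorial := by
          rw [mul_one, norm_div, norm_pow, h1, Complex.norm_natCast]
  simp_rw [hpt]
  rw [integral_tsum]
  · congr 1
    funext k
    simp only [hf_def]
    rw [MeasureTheory.integral_const_mul, intervalIntegral.integral_of_le Real.pi_pos.le,
      ← integral_Icc_eq_integral_Ioc, myofReal]
  · intro k
    apply Continuous.aestronglyMeasurable
    fun_prop
  · apply ne_of_lt
    calc ∑' k, ∫⁻ θ in Set.Icc (0:ℝ) π, ‖f k θ‖₊ ∂volume
        ≤ ∑' k, ENNReal.ofReal (|z| ^ k / k.factorial) * ENNReal.ofReal π := by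
          apply ENNReal.tsum_le_tsum
          intro k
          calc ∫⁻ θ in Set.Icc (0:ℝ) π, ‖f k θ‖₊ ∂volume
              ≤ ∫⁻ _ in Set.Icc (0:ℝ) π, ENNReal.ofReal (|z| ^ k / k.factorial) ∂volume := by
                apply lintegral_mono
                intro θ
                simp only [← enorm_eq_nnnorm, ← ofReal_norm]
                exact ENNReal.ofReal_le_ofReal (hnorm k θ)
            _ = ENNReal.ofReal (|z| ^ k / k.factorial) * ENNReal.ofReal π := by
                rw [lintegral_const, Measure.restrict_apply_univ, Real.volume_Icc]
                simp
      _ = (∑' k, ENNReal.ofReal (|z| ^ k / k.factorial)) * ENNReal.ofReal π :=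
          ENNReal.tsum_mul_right
      _ < ⊤ := by
          apply ENNReal.mul_lt_top _ ENNReal.ofReal_lt_top
          rw [← ENNReal.ofReal_tsum_of_nonneg (fun k => by positivity)
            (Real.summable_pow_div_factorial |z|)]
          exact ENNReal.ofReal_lt_top

lemma I0_term (z : ℝ) (j : ℕ) :
    (-1:ℝ)^j * z^(2*j) / (2*j).factorial *
      (π * (2*j).factorial / (2*4^j*j.factorial*(j+1).factorial))
    = π/2 * gser 1 z j := by
  rw [gser, pow_half_sq]
  have hf : ((2*j).factorial : ℝ) ≠ 0 := by positivity
  have h1 : ((j+1).factorial : ℝ) ≠ 0 := by positivity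
  have h2 : ((j).factorial : ℝ) ≠ 0 := by positivity
  field_simp

lemma I1_term (z : ℝ) (j : ℕ) :
    (-1:ℝ)^j * z^(2*j) * z / (2*j+1).factorial *
      (π * (2*j+2).factorial / (2*4^(j+1)*(j+1).factorial*(j+2).factorial))
    = π*z/4 * gser 2 z j := by
  rw [gser, pow_half_sq]
  have h1 : ((2*j+2).factorial : ℝ) = (2*j+2) * (2*j+1).factorial := by
    exact_mod_cast Nat.factorial_succ (2*j+1)
  have h2 : ((j+1).factorial : ℝ) = (j+1) * j.factorial := by
    exact_mod_cast Nat.factorial_succ j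
  rw [h1, h2]
  have hf : ((2*j+1).factorial : ℝ) ≠ 0 := by positivity
  have h3 : ((j+2).factorial : ℝ) ≠ 0 := by positivity
  have h4 : ((j).factorial : ℝ) ≠ 0 := by positivity
  field_simp
  ring

lemma I2_term (z : ℝ) (j : ℕ) :
    (-1:ℝ)^j * z^(2*j) / (2*j).factorial *
      (π * (2*j+2).factorial / (2*4^(j+1)*(j+1).factorial*(j+2).factorial))
    = π/2 * gser 1 z j - 3*π/4 * gser 2 z j := by
  rw [gser, gser, pow_half_sq]
  have h1 : ((2*j+2).factorial : ℝ) = (2*j+2) * ((2*j+1) * (2*j).factorial) := by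
    rw [show 2*j+2 = (2*j+1)+1 from rfl, Nat.factorial_succ, Nat.factorial_succ]
    push_cast
    ring
  have h2 : ((j+1).factorial : ℝ) = (j+1) * j.factorial := by
    exact_mod_cast Nat.factorial_succ j
  have h3 : ((j+2).factorial : ℝ) = (j+2) * ((j+1) * j.factorial) := by
    rw [show j+2 = (j+1)+1 from rfl, Nat.factorial_succ, Nat.factorial_succ]
    push_cast
    ring
  rw [h1, h3, h2]
  have hf : ((2*j).factorial : ℝ) ≠ 0 := by positivity
  have h4 : ((j).factorial : ℝ) ≠ 0 := by positivity
  field_simp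
  ring

lemma I0_eq (z : ℝ) :
    ∫ θ in Set.Icc (0:ℝ) π,
        Complex.exp (Complex.I * z * Real.cos θ) * ((Real.sin θ ^ 2 * Real.cos θ ^ 0 : ℝ) : ℂ)
      = ((π/2 * gs 1 z : ℝ) : ℂ) := by
  rw [integral_exp_expand]
  set F : ℕ → ℂ := fun k => (Complex.I * z) ^ k / (k.factorial : ℂ) *
      ((∫ x in (0:ℝ)..π, Real.cos x ^ (k+0) * Real.sin x ^ 2 : ℝ) : ℂ) with hF
  have he : HasSum (fun j : ℕ => F (2*j)) ((π/2 * gs 1 z : ℝ) : ℂ) := by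
    have h : HasSum (fun j : ℕ => ((π/2 * gser 1 z j : ℝ) : ℂ)) ((π/2 * gs 1 z : ℝ) : ℂ) :=
      Complex.hasSum_ofReal.mpr ((gs_summable 1 z).hasSum.mul_left (π/2))
    apply h.congr_fun
    intro j
    simp only [hF, Nat.add_zero]
    rw [Iz_pow_even, momentM_even j, ← I0_term z j]
    push_cast
    ring
  have ho : HasSum (fun j : ℕ => F (2*j+1)) 0 := by
    have : (fun j : ℕ => F (2*j+1)) = fun _ => (0:ℂ) := by
      funext j
      simp only [hF, Nat.add_zero]
      rw [momentM_odd j]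
      simp
    rw [this]
    exact hasSum_zero
  have := (he.even_add_odd ho).tsum_eq
  rw [add_zero] at this
  exact this

lemma I1_eq (z : ℝ) :
    ∫ θ in Set.Icc (0:ℝ) π,
        Complex.exp (Complex.I * z * Real.cos θ) * ((Real.sin θ ^ 2 * Real.cos θ ^ 1 : ℝ) : ℂ)
      = Complex.I * ((π*z/4 * gs 2 z : ℝ) : ℂ) := by
  rw [integral_exp_expand]
  set F : ℕ → ℂ := fun k => (Complex.I * z) ^ k / (k.factorial : ℂ) *
      ((∫ x in (0:ℝ)..π, Real.cos x ^ (k+1) * Real.sin x ^ 2 : ℝ) : ℂ) with hF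
  have he : HasSum (fun j : ℕ => F (2*j)) 0 := by
    have : (fun j : ℕ => F (2*j)) = fun _ => (0:ℂ) := by
      funext j
      simp only [hF]
      rw [momentM_odd j]
      simp
    rw [this]
    exact hasSum_zero
  have ho : HasSum (fun j : ℕ => F (2*j+1)) (Complex.I * ((π*z/4 * gs 2 z : ℝ) : ℂ)) := by
    have h : HasSum (fun j : ℕ => Complex.I * ((π*z/4 * gser 2 z j : ℝ) : ℂ))
        (Complex.I * ((π*z/4 * gs 2 z : ℝ) : ℂ)) :=
      (Complex.hasSum_ofReal.mpr ((gs_summable 2 z).hasSum.mul_left (π*z/4))).mul_left Complex.I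
    apply h.congr_fun
    intro j
    simp only [hF]
    rw [show 2*j+1+1 = 2*(j+1) from by ring, momentM_even (j+1),
      pow_succ, Iz_pow_even,
      show 2*(j+1) = 2*j+2 from by ring, show j+1+1 = j+2 from rfl,
      ← I1_term z j]
    push_cast
    ring
  have := (he.even_add_odd ho).tsum_eq
  rw [zero_add] at this
  exact this

lemma I2_eq (z : ℝ) :
    ∫ θ in Set.Icc (0:ℝ) π,
        Complex.exp (Complex.I * z * Real.cos θ) * ((Real.sin θ ^ 2 * Real.cos θ ^ 2 : ℝ) : ℂ)
      = ((π/2 * gs 1 z - 3*π/4 * gs 2 z : ℝ) : ℂ) := by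
  rw [integral_exp_expand]
  set F : ℕ → ℂ := fun k => (Complex.I * z) ^ k / (k.factorial : ℂ) *
      ((∫ x in (0:ℝ)..π, Real.cos x ^ (k+2) * Real.sin x ^ 2 : ℝ) : ℂ) with hF
  have he : HasSum (fun j : ℕ => F (2*j)) ((π/2 * gs 1 z - 3*π/4 * gs 2 z : ℝ) : ℂ) := by
    have h : HasSum (fun j : ℕ => ((π/2 * gser 1 z j - 3*π/4 * gser 2 z j : ℝ) : ℂ))
        ((π/2 * gs 1 z - 3*π/4 * gs 2 z : ℝ) : ℂ) :=
      Complex.hasSum_ofReal.mpr (((gs_summable 1 z).hasSum.mul_left (π/2)).sub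
        ((gs_summable 2 z).hasSum.mul_left (3*π/4)))
    apply h.congr_fun
    intro j
    simp only [hF]
    rw [show 2*j+2 = 2*(j+1) from by ring, momentM_even (j+1), Iz_pow_even,
      show 2*(j+1) = 2*j+2 from by ring, show j+1+1 = j+2 from rfl,
      ← I2_term z j]
    push_cast
    ring
  have ho : HasSum (fun j : ℕ => F (2*j+1)) 0 := by
    have : (fun j : ℕ => F (2*j+1)) = fun _ => (0:ℂ) := by
      funext j
      simp only [hF]
      rw [show 2*j+1+2 = 2*(j+1)+1 from by ring, momentM_odd (j+1)]
      simp
    rw [this]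
    exact hasSum_zero
  have := (he.even_add_odd ho).tsum_eq
  rw [add_zero] at this
  exact this

/-- The characteristic function of the trace distribution on `USp₄`:
`∫_{[0,π]²} e^{2it(cosθ₁+cosθ₂)} δ₂(θ₁,θ₂) dθ₁dθ₂
  = 4 J₁(2t)²/t² − 6 J₁(2t)J₂(2t)/t³ + 4 J₂(2t)²/t²` for `t ≠ 0`. -/
theorem charFun_trace_USp4 (t : ℝ) (ht : t ≠ 0) :
    ∫ θ in (Set.Icc (0 : ℝ) Real.pi) ×ˢ (Set.Icc (0 : ℝ) Real.pi),
        Complex.exp (2 * Complex.I * (t : ℂ) * ((Real.cos θ.1 : ℂ) + (Real.cos θ.2 : ℂ))) *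
          ((weylDensity2 θ.1 θ.2 : ℝ) : ℂ)
      = ((4 * besselJ 1 (2 * t) ^ 2 / t ^ 2
          - 6 * besselJ 1 (2 * t) * besselJ 2 (2 * t) / t ^ 3
          + 4 * besselJ 2 (2 * t) ^ 2 / t ^ 2 : ℝ) : ℂ) := by
  have hπ : (Real.pi : ℝ) ≠ 0 := Real.pi_ne_zero
  set z : ℝ := 2*t with hz
  set E : ℝ → ℂ := fun x => Complex.exp (Complex.I * z * Real.cos x) with hE
  set A : ℝ → ℂ := fun x => E x * ((Real.sin x ^ 2 * Real.cos x ^ 0 : ℝ) : ℂ) with hA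
  set B : ℝ → ℂ := fun x => E x * ((Real.sin x ^ 2 * Real.cos x ^ 1 : ℝ) : ℂ) with hB
  set C : ℝ → ℂ := fun x => E x * ((Real.sin x ^ 2 * Real.cos x ^ 2 : ℝ) : ℂ) with hC
  have hEc : Continuous E := by
    apply Complex.continuous_exp.comp
    fun_prop
  have hAc : Continuous A := by apply hEc.mul; fun_prop
  have hBc : Continuous B := by apply hEc.mul; fun_prop
  have hCc : Continuous C := by apply hEc.mul; fun_prop
  have hpt : ∀ θ : ℝ × ℝ,
      Complex.exp (2 * Complex.I * (t : ℂ) * ((Real.cos θ.1 : ℂ) + (Real.cos θ.2 : ℂ))) *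
          ((weylDensity2 θ.1 θ.2 : ℝ) : ℂ)
      = (8/(Real.pi:ℂ)^2) *
          ((C θ.1 * A θ.2) - 2 * (B θ.1 * B θ.2) + (A θ.1 * C θ.2)) := by
    intro θ
    simp only [hA, hB, hC, hE, weylDensity2]
    rw [show (2 * Complex.I * (t:ℂ) * ((Real.cos θ.1 : ℂ) + (Real.cos θ.2 : ℂ)))
        = Complex.I * z * Real.cos θ.1 + Complex.I * z * Real.cos θ.2 from by
      push_cast [hz]; ring, Complex.exp_add]
    push_cast
    ring
  have hint : ∀ (f g : ℝ → ℂ), Continuous f → Continuous g →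
      IntegrableOn (fun θ : ℝ × ℝ => f θ.1 * g θ.2)
        ((Set.Icc (0:ℝ) Real.pi) ×ˢ (Set.Icc (0:ℝ) Real.pi)) volume := by
    intro f g hf hg
    exact ((hf.comp continuous_fst).mul (hg.comp continuous_snd)).continuousOn.integrableOn_compact
      (isCompact_Icc.prod isCompact_Icc)
  have hCA := hint C A hCc hAc
  have hAC := hint A C hAc hCc
  have hBB : IntegrableOn (fun a : ℝ × ℝ => 2 * (B a.1 * B a.2))
      ((Set.Icc (0:ℝ) Real.pi) ×ˢ (Set.Icc (0:ℝ) Real.pi)) volume :=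
    (hint B B hBc hBc).const_mul 2
  have hsub : IntegrableOn (fun a : ℝ × ℝ => C a.1 * A a.2 - 2 * (B a.1 * B a.2))
      ((Set.Icc (0:ℝ) Real.pi) ×ˢ (Set.Icc (0:ℝ) Real.pi)) volume := hCA.sub hBB
  simp only [hpt]
  rw [MeasureTheory.integral_const_mul]
  rw [integral_add hsub hAC, integral_sub hCA hBB, MeasureTheory.integral_const_mul]
  rw [Measure.volume_eq_prod]
  rw [setIntegral_prod_mul C A, setIntegral_prod_mul B B, setIntegral_prod_mul A C]
  have h0 := I0_eq z
  have h1 := I1_eq z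
  have h2 := I2_eq z
  rw [show (∫ x in Set.Icc (0:ℝ) Real.pi, A x) = ((π/2 * gs 1 z : ℝ) : ℂ) from h0,
    show (∫ x in Set.Icc (0:ℝ) Real.pi, B x) = Complex.I * ((π*z/4 * gs 2 z : ℝ) : ℂ) from h1,
    show (∫ x in Set.Icc (0:ℝ) Real.pi, C x)
      = ((π/2 * gs 1 z - 3*π/4 * gs 2 z : ℝ) : ℂ) from h2]
  have hJ1 : besselJ 1 (2*t) = t * gs 1 z := by
    rw [besselJ_eq_gs, hz]; ring
  have hJ2 : besselJ 2 (2*t) = t^2 * gs 2 z := by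
    rw [besselJ_eq_gs, hz]; ring_nf
  have hreal : (4 * besselJ 1 (2 * t) ^ 2 / t ^ 2
          - 6 * besselJ 1 (2 * t) * besselJ 2 (2 * t) / t ^ 3
          + 4 * besselJ 2 (2 * t) ^ 2 / t ^ 2 : ℝ)
      = 4 * (gs 1 z)^2 - 6 * gs 1 z * gs 2 z + z^2 * (gs 2 z)^2 := by
    rw [hJ1, hJ2, hz]
    field_simp
    ring
  rw [hreal]
  have hI2 : Complex.I^2 = -1 := Complex.I_sq
  push_cast
  ring_nf
  rw [hI2]
  have hπc : (Real.pi : ℂ) ≠ 0 := by exact_mod_cast hπ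
  push_cast
  field_simp
  ring
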